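/- Let f = a_0 + 2a_1 : V_n → Z_4 with a_0, a_1 Boolean functions and n even. If f is gbent, then for any two pairs of vertices {a,b} and {c,d} in the Cayley graph of f (edge weights f(u⊕v) ∈ Z_4), |N_{{2,3}}(a,b)| = |N_{{2,3}}(c,d)|, where N_{{2,3}}(a,b) is the set of vertices w with f(w⊕a) ∈ {2,3} and f(w⊕b) ∈ {2,3}. -/

import Mathlib

open Finset BigOperators

noncomputable def zeta (q : ℕ) : ℂ := Complex.exp (2 * Real.pi * Complex.I / q)

def dotp {n : ℕ} (u x : Fin n → ZMod 2) : ZMod 2 := ∑ i, u i * x i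

noncomputable def chr {n : ℕ} (u x : Fin n → ZMod 2) : ℂ := (-1 : ℂ) ^ (dotp u x).val

noncomputable def WHT {n q : ℕ} (f : (Fin n → ZMod 2) → ZMod q) (u : Fin n → ZMod 2) : ℂ :=
  ∑ x, zeta q ^ (f x).val * chr u x

noncomputable def Amat {n q : ℕ} (f : (Fin n → ZMod 2) → ZMod q) :
    Matrix (Fin n → ZMod 2) (Fin n → ZMod 2) ℂ :=
  fun u v => zeta q ^ (f (u + v)).val

/-! Auxiliary machinery. -/

/-- The `ℤ`-valued character `(-1)^p` on `ZMod 2`. -/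
def c2 (p : ZMod 2) : ℤ := (-1) ^ p.val

lemma c2_add (p q : ZMod 2) : c2 (p + q) = c2 p * c2 q := by revert p q; decide

lemma c2_one_add (p : ZMod 2) : c2 (p + 1) = - c2 p := by revert p; decide

lemma V_add_self {n : ℕ} (v : Fin n → ZMod 2) : v + v = 0 := by
  funext i; exact CharTwo.add_self_eq_zero _

lemma dotp_add_left {n : ℕ} (u v x : Fin n → ZMod 2) :
    dotp (u + v) x = dotp u x + dotp v x := by
  simp [dotp, add_mul, Finset.sum_add_distrib]

lemma dotp_add_right {n : ℕ} (u x y : Fin n → ZMod 2) :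
    dotp u (x + y) = dotp u x + dotp u y := by
  simp [dotp, mul_add, Finset.sum_add_distrib]

lemma card_V (n : ℕ) : Fintype.card (Fin n → ZMod 2) = 2 ^ n := by
  simp

/-- The character sum `∑_u (-1)^{u·z}` vanishes unless `z = 0`. -/
lemma csum {n : ℕ} (z : Fin n → ZMod 2) :
    ∑ u, c2 (dotp u z) = if z = 0 then 2 ^ n else 0 := by
  split_ifs with h
  · subst h
    have h0 : ∀ u : Fin n → ZMod 2, dotp u 0 = 0 := by intro u; simp [dotp]
    simp [h0, c2, card_V]
  · obtain ⟨i, hi⟩ : ∃ i, z i ≠ 0 := by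
      by_contra hc; push_neg at hc; exact h (funext hc)
    have hz1 : z i = 1 := by
      have : ∀ p : ZMod 2, p ≠ 0 → p = 1 := by decide
      exact this _ hi
    set δ : Fin n → ZMod 2 := Pi.single i 1 with hδ
    have hdot : dotp δ z = 1 := by
      rw [dotp]
      rw [Finset.sum_eq_single i]
      · simp [hδ, hz1]
      · intro j _ hj; simp [hδ, Pi.single_eq_of_ne hj]
      · simp
    have key : ∀ u : Fin n → ZMod 2, c2 (dotp (u + δ) z) = - c2 (dotp u z) := by
      intro u
      rw [dotp_add_left, hdot, c2_one_add]
    have hs : ∑ u : Fin n → ZMod 2, c2 (dotp (u + δ) z) = ∑ u, c2 (dotp u z) :=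
      Equiv.sum_comp (Equiv.addRight δ) (fun u => c2 (dotp u z))
    simp only [key] at hs
    rw [Finset.sum_neg_distrib] at hs
    linarith

/-- Integer-valued Walsh–Hadamard transform of a Boolean function. -/
def Wz {n : ℕ} (g : (Fin n → ZMod 2) → ZMod 2) (u : Fin n → ZMod 2) : ℤ :=
  ∑ x, c2 (g x) * c2 (dotp u x)

lemma cond_iff {n : ℕ} (x y e : Fin n → ZMod 2) : x + y + e = 0 ↔ y = x + e := by
  constructor
  · intro h
    have hxy : x + y = e := by
      have h2 : (x + y + e) + e = 0 + e := by rw [h]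
      rwa [add_assoc, V_add_self, add_zero, zero_add] at h2
    calc y = x + x + y := by rw [V_add_self, zero_add]
      _ = x + (x + y) := by rw [add_assoc]
      _ = x + e := by rw [hxy]
  · intro h; subst h
    calc x + (x + e) + e = ((x + x) + e) + e := by rw [add_assoc x x e]
      _ = 0 := by rw [V_add_self, zero_add, V_add_self]

/-- A bent function has vanishing autocorrelation at every nonzero shift. -/
lemma bent_ac {n : ℕ} (g : (Fin n → ZMod 2) → ZMod 2)
    (hb : ∀ u, (Wz g u) ^ 2 = 2 ^ n) {e : Fin n → ZMod 2} (he : e ≠ 0) :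
    ∑ w, c2 (g w) * c2 (g (w + e)) = 0 := by
  have key : ∑ u : Fin n → ZMod 2, (Wz g u) ^ 2 * c2 (dotp u e)
      = 2 ^ n * ∑ w, c2 (g w) * c2 (g (w + e)) := by
    calc ∑ u : Fin n → ZMod 2, (Wz g u) ^ 2 * c2 (dotp u e)
        = ∑ u : Fin n → ZMod 2, ∑ x, ∑ y, (c2 (g x) * c2 (g y)) * c2 (dotp u (x + y + e)) := by
          apply Finset.sum_congr rfl; intro u _
          rw [sq, Wz, Finset.sum_mul_sum, Finset.sum_mul]
          apply Finset.sum_congr rfl; intro x _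
          rw [Finset.sum_mul]
          apply Finset.sum_congr rfl; intro y _
          rw [dotp_add_right, dotp_add_right, c2_add, c2_add]
          ring
      _ = ∑ x, ∑ y, (c2 (g x) * c2 (g y)) * ∑ u : Fin n → ZMod 2, c2 (dotp u (x + y + e)) := by
          rw [Finset.sum_comm]
          apply Finset.sum_congr rfl; intro x _
          rw [Finset.sum_comm]
          apply Finset.sum_congr rfl; intro y _
          rw [Finset.mul_sum]
      _ = ∑ x, ∑ y, (if y = x + e then (c2 (g x) * c2 (g y)) * 2 ^ n else 0) := by
          apply Finset.sum_congr rfl; intro x _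
          apply Finset.sum_congr rfl; intro y _
          rw [csum]
          by_cases hc : x + y + e = 0
          · rw [if_pos hc, if_pos ((cond_iff x y e).mp hc)]
          · rw [if_neg hc, if_neg (fun hy => hc ((cond_iff x y e).mpr hy)), mul_zero]
      _ = ∑ x, (c2 (g x) * c2 (g (x + e))) * 2 ^ n := by
          apply Finset.sum_congr rfl; intro x _
          rw [Finset.sum_ite_eq' univ (x + e) (fun y => c2 (g x) * c2 (g y) * 2 ^ n),
            if_pos (Finset.mem_univ _)]
      _ = 2 ^ n * ∑ w, c2 (g w) * c2 (g (w + e)) := by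
          rw [Finset.mul_sum]
          apply Finset.sum_congr rfl; intro x _; ring
  have key2 : ∑ u : Fin n → ZMod 2, (Wz g u) ^ 2 * c2 (dotp u e) = 0 := by
    simp_rw [hb]
    rw [← Finset.mul_sum, csum, if_neg he, mul_zero]
  rw [key2] at key
  have h2 : (2:ℤ) ^ n ≠ 0 := by positivity
  exact ((mul_eq_zero.mp key.symm).resolve_left h2)

/-- If `x² + y² = 2^(2m+1)` over `ℤ`, then `x² = 4^m`. -/
lemma sq_of_sum_sq (m : ℕ) : ∀ x y : ℤ, x ^ 2 + y ^ 2 = 2 ^ (2 * m + 1) → x ^ 2 = 4 ^ m := by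
  induction m with
  | zero =>
    intro x y h
    norm_num at h ⊢
    have hx2 : x ^ 2 ≤ 2 := by nlinarith [sq_nonneg y]
    have hy2 : y ^ 2 ≤ 2 := by nlinarith [sq_nonneg x]
    have hx1 : -1 ≤ x ∧ x ≤ 1 := by
      constructor <;> nlinarith [sq_nonneg (x + 2), sq_nonneg (x - 2)]
    have hy1 : -1 ≤ y ∧ y ≤ 1 := by
      constructor <;> nlinarith [sq_nonneg (y + 2), sq_nonneg (y - 2)]
    obtain ⟨h1, h2⟩ := hx1; obtain ⟨h3, h4⟩ := hy1
    interval_cases x <;> interval_cases y <;> omega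
  | succ m ih =>
    intro x y h
    have hpow : (2:ℤ) ^ (2 * (m + 1) + 1) = 4 * 2 ^ (2 * m + 1) := by ring
    rw [hpow] at h
    rcases Int.even_or_odd x with ⟨p, hp⟩ | ⟨p, hp⟩ <;>
      rcases Int.even_or_odd y with ⟨q, hq⟩ | ⟨q, hq⟩
    · subst hp; subst hq
      have h44 : 4 * (p ^ 2 + q ^ 2) = 4 * 2 ^ (2 * m + 1) := by linear_combination h
      have hpq : p ^ 2 + q ^ 2 = 2 ^ (2 * m + 1) := by linarith
      have h4 : ((p + p) : ℤ) ^ 2 = 4 * p ^ 2 := by ring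
      rw [h4, ih p q hpq]
      ring
    · exfalso
      subst hp; subst hq
      have hd : (4:ℤ) ∣ 1 := ⟨2 ^ (2 * m + 1) - p ^ 2 - (q ^ 2 + q), by linear_combination h⟩
      norm_num at hd
    · exfalso
      subst hp; subst hq
      have hd : (4:ℤ) ∣ 1 := ⟨2 ^ (2 * m + 1) - q ^ 2 - (p ^ 2 + p), by linear_combination h⟩
      norm_num at hd
    · exfalso
      subst hp; subst hq
      have hd : (4:ℤ) ∣ 2 := ⟨2 ^ (2 * m + 1) - (p ^ 2 + p) - (q ^ 2 + q), by linear_combination h⟩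
      norm_num at hd

lemma term_id (p q r : ZMod 2) :
    (Complex.I) ^ (p.val + 2 * q.val) * (-1 : ℂ) ^ r.val
      = ((1 + Complex.I) / 2) * ((c2 q * c2 r : ℤ) : ℂ)
        + ((1 - Complex.I) / 2) * ((c2 (p + q) * c2 r : ℤ) : ℂ) := by
  have h2 : ∀ s : ZMod 2, s = 0 ∨ s = 1 := by decide
  have hv2 : (2 : ZMod 2).val = 0 := rfl
  rcases h2 p with hp | hp <;> rcases h2 q with hq | hq <;> rcases h2 r with hr | hr <;>
    subst hp <;> subst hq <;> subst hr <;>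
    norm_num [c2, ZMod.val_zero, ZMod.val_one, hv2, pow_succ, Complex.I_mul_I] <;>
    ring_nf

/-- A gbent function `f = a₀ + 2a₁` has `a₁` bent. -/
lemma gbent_bent {n : ℕ} (hn : Even n)
    (f : (Fin n → ZMod 2) → ZMod 4) (a0 a1 : (Fin n → ZMod 2) → ZMod 2)
    (hf : ∀ x, f x = (((a0 x).val + 2 * (a1 x).val : ℕ) : ZMod 4))
    (hgbent : ∀ u : Fin n → ZMod 2,
      ‖∑ x, Complex.I ^ (f x).val * chr u x‖ = Real.sqrt (2 ^ n)) :
    ∀ u, (Wz a1 u) ^ 2 = 2 ^ n := by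
  intro u
  have hval : ∀ x, (f x).val = (a0 x).val + 2 * (a1 x).val := by
    intro x
    rw [hf x, ZMod.val_natCast_of_lt]
    have h0 := ZMod.val_lt (a0 x)
    have h1 := ZMod.val_lt (a1 x)
    omega
  set A : ℤ := Wz a1 u with hA
  set B : ℤ := Wz (fun x => a0 x + a1 x) u with hB
  have hH : (∑ x, Complex.I ^ (f x).val * chr u x)
      = ((1 + Complex.I) / 2) * (A : ℂ) + ((1 - Complex.I) / 2) * (B : ℂ) := by
    have hterm : ∀ x, Complex.I ^ (f x).val * chr u x
        = ((1 + Complex.I) / 2) * ((c2 (a1 x) * c2 (dotp u x) : ℤ) : ℂ)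
          + ((1 - Complex.I) / 2) * ((c2 (a0 x + a1 x) * c2 (dotp u x) : ℤ) : ℂ) := by
      intro x
      rw [hval x, chr]
      exact term_id (a0 x) (a1 x) (dotp u x)
    rw [Finset.sum_congr rfl (fun x _ => hterm x), Finset.sum_add_distrib,
      ← Finset.mul_sum, ← Finset.mul_sum]
    congr 1
    · congr 1
      rw [hA, Wz]
      push_cast
      rfl
    · congr 1
      rw [hB, Wz]
      push_cast
      rfl
  have hnorm : ‖((1 + Complex.I) / 2) * (A : ℂ) + ((1 - Complex.I) / 2) * (B : ℂ)‖ ^ 2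
      = (2:ℝ) ^ n := by
    rw [← hH, hgbent u, Real.sq_sqrt (by positivity)]
  have hre : (((1 + Complex.I) / 2) * (A : ℂ) + ((1 - Complex.I) / 2) * (B : ℂ)).re
      = ((A : ℝ) + (B : ℝ)) / 2 := by
    simp [Complex.add_re, Complex.mul_re, Complex.div_re]
    ring
  have him : (((1 + Complex.I) / 2) * (A : ℂ) + ((1 - Complex.I) / 2) * (B : ℂ)).im
      = ((A : ℝ) - (B : ℝ)) / 2 := by
    simp [Complex.add_im, Complex.mul_im, Complex.div_im]
    ring
  have hsq : ‖((1 + Complex.I) / 2) * (A : ℂ) + ((1 - Complex.I) / 2) * (B : ℂ)‖ ^ 2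
      = (((A : ℝ) + B) / 2) ^ 2 + (((A : ℝ) - B) / 2) ^ 2 := by
    rw [Complex.sq_norm, Complex.normSq_apply, hre, him]
    ring
  rw [hsq] at hnorm
  have hAB : (A : ℝ) ^ 2 + (B : ℝ) ^ 2 = 2 * 2 ^ n := by nlinarith
  have hABz : A ^ 2 + B ^ 2 = 2 ^ (n + 1) := by
    have : ((A ^ 2 + B ^ 2 : ℤ) : ℝ) = ((2 ^ (n + 1) : ℤ) : ℝ) := by
      push_cast
      rw [pow_succ]
      ring_nf
      ring_nf at hAB
      linarith [hAB]
    exact_mod_cast this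
  obtain ⟨m, hm⟩ := hn
  have hmn : n = 2 * m := by omega
  subst hmn
  have := sq_of_sum_sq m A B (by rw [hABz])
  rw [this]
  rw [show (4:ℤ) ^ m = 2 ^ (2 * m) by rw [pow_mul]; norm_num]

/-- If `f = a₀ + 2a₁ : V_n → Z₄` (`n` even) is gbent, then `|N_{{2,3}}(a,b)|` is the same for
all pairs of distinct vertices. -/
theorem gbent_N23_constant (n : ℕ) (hn : Even n)
    (f : (Fin n → ZMod 2) → ZMod 4) (a0 a1 : (Fin n → ZMod 2) → ZMod 2)
    (hf : ∀ x, f x = (((a0 x).val + 2 * (a1 x).val : ℕ) : ZMod 4))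
    (hgbent : ∀ u : Fin n → ZMod 2,
      ‖∑ x, Complex.I ^ (f x).val * chr u x‖ = Real.sqrt (2 ^ n)) :
    ∀ a b c d : Fin n → ZMod 2, a ≠ b → c ≠ d →
      (univ.filter (fun w : Fin n → ZMod 2 =>
        f (w + a) ∈ ({2, 3} : Finset (ZMod 4)) ∧ f (w + b) ∈ ({2, 3} : Finset (ZMod 4)))).card =
      (univ.filter (fun w : Fin n → ZMod 2 =>
        f (w + c) ∈ ({2, 3} : Finset (ZMod 4)) ∧ f (w + d) ∈ ({2, 3} : Finset (ZMod 4)))).card := by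
  have hbent : ∀ u, (Wz a1 u) ^ 2 = 2 ^ n := gbent_bent hn f a0 a1 hf hgbent
  have hm23 : ∀ x, (f x ∈ ({2, 3} : Finset (ZMod 4))) ↔ a1 x = 1 := by
    intro x
    have h2 : ∀ s : ZMod 2, s = 0 ∨ s = 1 := by decide
    rcases h2 (a0 x) with h0 | h0 <;> rcases h2 (a1 x) with h1 | h1 <;>
      rw [hf x, h0, h1] <;> decide
  have main : ∀ a b : Fin n → ZMod 2, a ≠ b →
      (4 : ℤ) * ((univ.filter (fun w : Fin n → ZMod 2 =>
          f (w + a) ∈ ({2, 3} : Finset (ZMod 4)) ∧ f (w + b) ∈ ({2, 3} : Finset (ZMod 4)))).card)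
        = 2 ^ n - 2 * ∑ w, c2 (a1 w) := by
    intro a b hab
    have hcard : ((univ.filter (fun w : Fin n → ZMod 2 =>
        f (w + a) ∈ ({2, 3} : Finset (ZMod 4)) ∧ f (w + b) ∈ ({2, 3} : Finset (ZMod 4)))).card : ℤ)
        = ∑ w : Fin n → ZMod 2,
            (if a1 (w + a) = 1 ∧ a1 (w + b) = 1 then (1:ℤ) else 0) := by
      rw [Finset.card_filter]
      push_cast
      apply Finset.sum_congr rfl
      intro w _
      exact if_congr (and_congr (hm23 _) (hm23 _)) rfl rfl
    rw [hcard, Finset.mul_sum]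
    have hpt : ∀ p q : ZMod 2,
        (4:ℤ) * (if p = 1 ∧ q = 1 then (1:ℤ) else 0) = (1 - c2 p) * (1 - c2 q) := by decide
    rw [Finset.sum_congr rfl (fun w _ => hpt (a1 (w + a)) (a1 (w + b)))]
    have hexp : ∀ w : Fin n → ZMod 2,
        (1 - c2 (a1 (w + a))) * (1 - c2 (a1 (w + b)))
          = 1 - c2 (a1 (w + a)) - c2 (a1 (w + b)) + c2 (a1 (w + a)) * c2 (a1 (w + b)) := by
      intro w; ring
    rw [Finset.sum_congr rfl (fun w _ => hexp w)]
    rw [Finset.sum_add_distrib, Finset.sum_sub_distrib, Finset.sum_sub_distrib]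
    have h1 : ∑ _w : Fin n → ZMod 2, (1:ℤ) = 2 ^ n := by
      rw [Finset.sum_const, Finset.card_univ, card_V]
      simp
    have hsh : ∀ v : Fin n → ZMod 2,
        ∑ w : Fin n → ZMod 2, c2 (a1 (w + v)) = ∑ w, c2 (a1 w) := by
      intro v
      exact Equiv.sum_comp (Equiv.addRight v) (fun w => c2 (a1 w))
    have hac : ∑ w : Fin n → ZMod 2, c2 (a1 (w + a)) * c2 (a1 (w + b)) = 0 := by
      have he : a + b ≠ 0 := by
        intro h0
        apply hab
        calc a = a + (b + b) := by rw [V_add_self, add_zero]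
          _ = (a + b) + b := by rw [add_assoc]
          _ = b := by rw [h0, zero_add]
      have hre : ∑ w : Fin n → ZMod 2, c2 (a1 (w + a)) * c2 (a1 (w + b))
          = ∑ w : Fin n → ZMod 2, c2 (a1 w) * c2 (a1 (w + (a + b))) := by
        rw [← Equiv.sum_comp (Equiv.addRight a)
          (fun w => c2 (a1 (w + a)) * c2 (a1 (w + b)))]
        apply Finset.sum_congr rfl
        intro w _
        have e1 : (w + a) + a = w := by rw [add_assoc, V_add_self, add_zero]
        have e2 : (w + a) + b = w + (a + b) := by rw [add_assoc]
        simp only [Equiv.coe_addRight]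
        rw [e1, e2]
      rw [hre]
      exact bent_ac a1 hbent he
    rw [h1, hsh a, hsh b, hac]
    ring
  intro a b c d hab hcd
  have hmain1 := main a b hab
  have hmain2 := main c d hcd
  have h4 : (4:ℤ) * ((univ.filter (fun w : Fin n → ZMod 2 =>
      f (w + a) ∈ ({2, 3} : Finset (ZMod 4)) ∧ f (w + b) ∈ ({2, 3} : Finset (ZMod 4)))).card)
      = (4:ℤ) * ((univ.filter (fun w : Fin n → ZMod 2 =>
      f (w + c) ∈ ({2, 3} : Finset (ZMod 4)) ∧ f (w + d) ∈ ({2, 3} : Finset (ZMod 4)))).card) := by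
    rw [hmain1, hmain2]
  have := mul_left_cancel₀ (by norm_num : (4:ℤ) ≠ 0) h4
  exact_mod_cast this
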